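/- Let r = Re(h) + ‖f‖² − ‖g‖² where h is a holomorphic function germ at p ∈ ℂⁿ and f, g are holomorphic mappings into ℂᴺ. For any unitary matrix U ∈ U(N), let I(U) be the ideal of holomorphic germs generated by h and the components of f − Ug. Then for every nonconstant holomorphic curve germ γ at p, inf_{φ ∈ I(U)} ν(φ ∘ γ) ≤ ν(r ∘ γ). -/

import Mathlib

open Filter Asymptotics Topology

/-- The order of vanishing at `0` of a function `f : ℂ → E`: the supremum of all `k`
such that `f(t) = O(‖t‖^k)` as `t → 0`. -/
noncomputable def vord {E : Type*} [NormedAddCommGroup E] (f : ℂ → E) : ℕ∞ :=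
  sSup {m : ℕ∞ | ∃ k : ℕ, m = (k : ℕ∞) ∧ f =O[nhds (0 : ℂ)] fun t => ‖t‖ ^ k}

/-- `γ` is a nonconstant holomorphic curve germ at `p`. -/
def IsCurveGerm {n : ℕ} (p : Fin n → ℂ) (γ : ℂ → (Fin n → ℂ)) : Prop :=
  AnalyticAt ℂ γ 0 ∧ γ 0 = p ∧ ¬ (∀ᶠ t in nhds (0 : ℂ), γ t = p)

/-- `ν(γ)`: the minimum of the vanishing orders of the components of `γ - p`. -/
noncomputable def curveMult {n : ℕ} (p : Fin n → ℂ) (γ : ℂ → (Fin n → ℂ)) : ℕ∞ :=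
  vord (fun t => γ t - p)

/-- Ratio of two extended-natural vanishing orders, as an extended nonnegative real. -/
noncomputable def nuRatio (a b : ℕ∞) : ENNReal := (a : ENNReal) / (b : ENNReal)

/-- The Taylor polynomial of order `k` of `r` at `p`. -/
noncomputable def taylorPoly {E : Type*} [NormedAddCommGroup E] [NormedSpace ℝ E]
    (r : E → ℝ) (p : E) (k : ℕ) : E → ℝ :=
  fun z => ∑ i ∈ Finset.range (k + 1),
    ((i.factorial : ℝ))⁻¹ • iteratedFDeriv ℝ i r p (fun _ => z - p)

/-- The algebra of germs of `ℂ`-valued functions: `ℂ` acts through constant germs. -/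
noncomputable instance germAlgebra {α : Type*} (l : Filter α) : Algebra ℂ (l.Germ ℂ) :=
  ((Filter.Germ.coeRingHom l).comp (Pi.constRingHom α ℂ)).toAlgebra

/-- The ring `O_p` of germs at `p` of holomorphic functions on `ℂⁿ`, realized as a
subalgebra of the algebra of germs at `p` of all `ℂ`-valued functions. -/
noncomputable def holGerms {n : ℕ} (p : Fin n → ℂ) : Subalgebra ℂ ((nhds p).Germ ℂ) where
  carrier := {g | ∃ f : (Fin n → ℂ) → ℂ, AnalyticAt ℂ f p ∧ g = (f : (nhds p).Germ ℂ)}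
  mul_mem' := by
    rintro _ _ ⟨f, hf, rfl⟩ ⟨g, hg, rfl⟩
    exact ⟨f * g, hf.mul hg, rfl⟩
  add_mem' := by
    rintro _ _ ⟨f, hf, rfl⟩ ⟨g, hg, rfl⟩
    exact ⟨f + g, hf.add hg, rfl⟩
  algebraMap_mem' := fun c => ⟨fun _ => c, analyticAt_const, rfl⟩

/-- The vanishing order along a curve `γ` of a germ `g` at `p = γ(0)`: the common value of
`ν(f ∘ γ)` over all representatives `f` of the germ `g`. -/
noncomputable def ordAlong {n : ℕ} {p : Fin n → ℂ} (γ : ℂ → (Fin n → ℂ))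
    (g : (nhds p).Germ ℂ) : ℕ∞ :=
  sSup {m : ℕ∞ | ∃ f : (Fin n → ℂ) → ℂ, (f : (nhds p).Germ ℂ) = g ∧ m = vord (f ∘ γ)}

section Aux

open Matrix

lemma norm_sq_re' (a : ℂ) : ‖a‖ ^ 2 = ((starRingEnd ℂ) a * a).re := by
  rw [mul_comm, Complex.mul_conj]
  simp [Complex.normSq_eq_norm_sq, ← Complex.ofReal_pow]

lemma unitary_sum_sq {N : ℕ} (U : Matrix.unitaryGroup (Fin N) ℂ) (v : Fin N → ℂ) :
    ∑ j, ‖(U : Matrix (Fin N) (Fin N) ℂ).mulVec v j‖ ^ 2 = ∑ j, ‖v j‖ ^ 2 := by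
  have hU : (U : Matrix (Fin N) (Fin N) ℂ)ᴴ * (U : Matrix (Fin N) (Fin N) ℂ) = 1 := by
    have := (Unitary.mem_iff.mp U.2).1
    rwa [Matrix.star_eq_conjTranspose] at this
  have key : star ((U : Matrix (Fin N) (Fin N) ℂ).mulVec v) ⬝ᵥ
      ((U : Matrix (Fin N) (Fin N) ℂ).mulVec v) = star v ⬝ᵥ v := by
    rw [Matrix.star_mulVec, Matrix.dotProduct_mulVec, Matrix.vecMul_vecMul, hU,
      Matrix.vecMul_one]
  have hre : ∀ w : Fin N → ℂ, (∑ j, ‖w j‖ ^ 2 : ℝ) = (star w ⬝ᵥ w).re := by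
    intro w
    rw [dotProduct, Complex.re_sum]
    exact Finset.sum_congr rfl fun j _ => norm_sq_re' (w j)
  rw [hre, hre, key]

lemma vord_of_isBigO {E : Type*} [NormedAddCommGroup E] {f : ℂ → E} {k : ℕ}
    (h : f =O[nhds (0 : ℂ)] fun t => ‖t‖ ^ k) : (k : ℕ∞) ≤ vord f :=
  le_sSup ⟨k, rfl, h⟩

lemma pow_isBigO_pow {j k : ℕ} (hk : k ≤ j) :
    (fun t : ℂ => ‖t‖ ^ j) =O[nhds (0 : ℂ)] fun t => ‖t‖ ^ k := by
  refine Asymptotics.IsBigO.of_bound 1 ?_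
  filter_upwards [Metric.ball_mem_nhds (0 : ℂ) one_pos] with t ht
  simp only [Metric.mem_ball, dist_zero_right] at ht
  rw [one_mul]
  simp only [norm_pow, norm_norm]
  exact pow_le_pow_of_le_one (norm_nonneg t) ht.le hk

lemma isBigO_of_vord {E : Type*} [NormedAddCommGroup E] {f : ℂ → E} {k : ℕ} (hk : 0 < k)
    (h : (k : ℕ∞) ≤ vord f) : f =O[nhds (0 : ℂ)] fun t => ‖t‖ ^ k := by
  by_contra hO
  have hb : vord f ≤ ((k - 1 : ℕ) : ℕ∞) := by
    refine sSup_le ?_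
    rintro m ⟨j, rfl, hj⟩
    have hjk : j < k := by
      by_contra hjk
      exact hO (hj.trans (pow_isBigO_pow (le_of_not_gt hjk)))
    exact_mod_cast Nat.le_sub_one_of_lt hjk
  have : (k : ℕ∞) ≤ ((k - 1 : ℕ) : ℕ∞) := le_trans h hb
  have : k ≤ k - 1 := by exact_mod_cast this
  omega

lemma vord_congr {E : Type*} [NormedAddCommGroup E] {f g : ℂ → E}
    (h : f =ᶠ[nhds (0 : ℂ)] g) : vord f = vord g := by
  unfold vord
  congr 1
  ext m
  constructor
  · rintro ⟨k, rfl, hO⟩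
    exact ⟨k, rfl, h.symm.trans_isBigO hO⟩
  · rintro ⟨k, rfl, hO⟩
    exact ⟨k, rfl, h.trans_isBigO hO⟩

lemma ordAlong_coe {n : ℕ} {p : Fin n → ℂ} {γ : ℂ → (Fin n → ℂ)}
    (hγc : Filter.Tendsto γ (nhds (0 : ℂ)) (nhds p)) (f : (Fin n → ℂ) → ℂ) :
    ordAlong γ (f : (nhds p).Germ ℂ) = vord (f ∘ γ) := by
  have hset : {m : ℕ∞ | ∃ f' : (Fin n → ℂ) → ℂ,
      (f' : (nhds p).Germ ℂ) = (f : (nhds p).Germ ℂ) ∧ m = vord (f' ∘ γ)}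
      = {vord (f ∘ γ)} := by
    ext m
    simp only [Set.mem_setOf_eq, Set.mem_singleton_iff]
    constructor
    · rintro ⟨f', hf', rfl⟩
      exact vord_congr ((Filter.Germ.coe_eq.mp hf').comp_tendsto hγc)
    · rintro rfl
      exact ⟨f, rfl, rfl⟩
  rw [ordAlong, hset, sSup_singleton]

end Aux

/-- Jiri–McNeal / D'Angelo. Let `r = Re h + ‖f‖² − ‖g‖²` with `h, f, g`
holomorphic at `p`, and for a unitary `U` let `I(U)` be the ideal of holomorphic germs at `p`
generated by `h` and the components of `f − Ug`. Then for every nonconstant holomorphic curve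
germ `γ` at `p`, `inf_{φ ∈ I(U)} ν(φ ∘ γ) ≤ ν(r ∘ γ)`. -/
theorem ideal_order_le_order {n N : ℕ} (p : Fin n → ℂ)
    (h : (Fin n → ℂ) → ℂ) (f g : (Fin n → ℂ) → Fin N → ℂ)
    (hh : AnalyticAt ℂ h p) (hf : AnalyticAt ℂ f p) (hg : AnalyticAt ℂ g p)
    (r : (Fin n → ℂ) → ℝ)
    (hr : ∀ z, r z = (h z).re + ∑ j, ‖f z j‖ ^ 2 - ∑ j, ‖g z j‖ ^ 2)
    (U : Matrix.unitaryGroup (Fin N) ℂ)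
    (IU : Ideal (holGerms p))
    (hIU : IU = Ideal.span {x : holGerms p |
      (x : (nhds p).Germ ℂ) = (h : (nhds p).Germ ℂ) ∨
      ∃ j, (x : (nhds p).Germ ℂ)
        = ((fun z => f z j - (U : Matrix (Fin N) (Fin N) ℂ).mulVec (g z) j) :
            (nhds p).Germ ℂ)})
    (γ : ℂ → (Fin n → ℂ)) (hγ : IsCurveGerm p γ) :
    (⨅ φ ∈ IU, ordAlong γ (φ : (nhds p).Germ ℂ)) ≤ vord (r ∘ γ) := by
  obtain ⟨hγa, hγ0, -⟩ := hγ
  have hγc : Filter.Tendsto γ (nhds (0 : ℂ)) (nhds p) := by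
    simpa [hγ0] using hγa.continuousAt.tendsto
  by_contra hcon
  push_neg at hcon
  obtain ⟨s, hs⟩ : ∃ s : ℕ, vord (r ∘ γ) = (s : ℕ∞) := by
    have hx := (hcon.trans_le le_top).ne
    lift vord (r ∘ γ) to ℕ using hx with s hs
    exact ⟨s, rfl⟩
  -- every generator is `O(‖t‖^(s+1))` along `γ`
  have key : ∀ (φ : (Fin n → ℂ) → ℂ), AnalyticAt ℂ φ p →
      ((φ : (nhds p).Germ ℂ) = (h : (nhds p).Germ ℂ) ∨
        ∃ j, (φ : (nhds p).Germ ℂ)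
          = ((fun z => f z j - (U : Matrix (Fin N) (Fin N) ℂ).mulVec (g z) j) :
              (nhds p).Germ ℂ)) →
      (φ ∘ γ) =O[nhds (0 : ℂ)] fun t => ‖t‖ ^ (s + 1) := by
    intro φ hφ hmem
    set x : holGerms p := ⟨(φ : (nhds p).Germ ℂ), ⟨φ, hφ, rfl⟩⟩ with hxdef
    have hx : x ∈ IU := by
      rw [hIU]; exact Ideal.subset_span hmem
    have h1 : (⨅ ψ ∈ IU, ordAlong γ (ψ : (nhds p).Germ ℂ))
        ≤ ordAlong γ (x : (nhds p).Germ ℂ) := iInf₂_le x hx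
    have h2 : ((s + 1 : ℕ) : ℕ∞) ≤ ordAlong γ (x : (nhds p).Germ ℂ) := by
      refine le_trans ?_ h1
      push_cast
      exact Order.add_one_le_of_lt (hs ▸ hcon)
    have hxg : (x : (nhds p).Germ ℂ) = (φ : (nhds p).Germ ℂ) := rfl
    rw [hxg, ordAlong_coe hγc] at h2
    exact isBigO_of_vord (Nat.succ_pos s) h2
  -- the generators
  have hh1 : (h ∘ γ) =O[nhds (0 : ℂ)] fun t => ‖t‖ ^ (s + 1) := key h hh (Or.inl rfl)
  have hfj : ∀ j, AnalyticAt ℂ (fun z => f z j) p := fun j =>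
    ((ContinuousLinearMap.proj j : (Fin N → ℂ) →L[ℂ] ℂ).analyticAt (f p)).comp hf
  have hgj : ∀ j, AnalyticAt ℂ (fun z => g z j) p := fun j =>
    ((ContinuousLinearMap.proj j : (Fin N → ℂ) →L[ℂ] ℂ).analyticAt (g p)).comp hg
  have hBj : ∀ j, AnalyticAt ℂ
      (fun z => (U : Matrix (Fin N) (Fin N) ℂ).mulVec (g z) j) p := by
    intro j
    have heq : (fun z => (U : Matrix (Fin N) (Fin N) ℂ).mulVec (g z) j)
        = fun z => ∑ i, (U : Matrix (Fin N) (Fin N) ℂ) j i * g z i := by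
      funext z; simp [Matrix.mulVec, dotProduct]
    rw [heq]
    exact Finset.analyticAt_fun_sum _ fun i _ => analyticAt_const.mul (hgj i)
  have hD : ∀ j, ((fun z => f z j - (U : Matrix (Fin N) (Fin N) ℂ).mulVec (g z) j) ∘ γ)
      =O[nhds (0 : ℂ)] fun t => ‖t‖ ^ (s + 1) := fun j =>
    key _ ((hfj j).sub (hBj j)) (Or.inr ⟨j, rfl⟩)
  -- boundedness of f and Ug along γ
  have hFO : ∀ j, (fun t => f (γ t) j) =O[nhds (0 : ℂ)] (fun _ => (1 : ℝ)) := by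
    intro j
    have : Filter.Tendsto (fun t => f (γ t) j) (nhds (0 : ℂ)) (nhds (f p j)) := by
      have := ((hfj j).continuousAt.tendsto).comp hγc
      exact this
    exact this.isBigO_one ℝ
  have hBO : ∀ j, (fun t => (U : Matrix (Fin N) (Fin N) ℂ).mulVec (g (γ t)) j)
      =O[nhds (0 : ℂ)] (fun _ => (1 : ℝ)) := by
    intro j
    have : Filter.Tendsto (fun t => (U : Matrix (Fin N) (Fin N) ℂ).mulVec (g (γ t)) j)
        (nhds (0 : ℂ)) (nhds ((U : Matrix (Fin N) (Fin N) ℂ).mulVec (g p) j)) := by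
      have := ((hBj j).continuousAt.tendsto).comp hγc
      exact this
    exact this.isBigO_one ℝ
  -- conjugates
  have hconj : ∀ (u : ℂ → ℂ) (w : ℂ → ℝ), u =O[nhds (0 : ℂ)] w →
      (fun t => (starRingEnd ℂ) (u t)) =O[nhds (0 : ℂ)] w := by
    intro u w hu
    have : (fun t => (starRingEnd ℂ) (u t)) =O[nhds (0 : ℂ)] u := by
      refine Asymptotics.IsBigO.of_bound 1 (Filter.Eventually.of_forall fun t => ?_)
      simp
    exact this.trans hu
  -- the complex function whose real part is r ∘ γ
  set D : Fin N → ℂ → ℂ := fun j t =>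
    f (γ t) j - (U : Matrix (Fin N) (Fin N) ℂ).mulVec (g (γ t)) j with hDdef
  have hZ : (fun t => h (γ t) + ∑ j,
      ((starRingEnd ℂ) (f (γ t) j) * D j t
        + (starRingEnd ℂ) (D j t) * (U : Matrix (Fin N) (Fin N) ℂ).mulVec (g (γ t)) j))
      =O[nhds (0 : ℂ)] fun t => ‖t‖ ^ (s + 1) := by
    refine Asymptotics.IsBigO.add hh1 ?_
    refine Asymptotics.IsBigO.fun_sum fun j _ => Asymptotics.IsBigO.add ?_ ?_
    · have hm := (hconj _ _ (hFO j)).mul (hD j)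
      have : (fun t => (1 : ℝ) * ‖t‖ ^ (s + 1)) = fun t : ℂ => ‖t‖ ^ (s + 1) := by
        funext t; rw [one_mul]
      rwa [this] at hm
    · have hm := (hconj _ _ (hD j)).mul (hBO j)
      have : (fun t : ℂ => ‖t‖ ^ (s + 1) * (1 : ℝ)) = fun t : ℂ => ‖t‖ ^ (s + 1) := by
        funext t; rw [mul_one]
      rwa [this] at hm
  have habre : ∀ a b : ℂ,
      ((starRingEnd ℂ) a * (a - b) + (starRingEnd ℂ) (a - b) * b).re = ‖a‖ ^ 2 - ‖b‖ ^ 2 := by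
    intro a b
    have h1 : (starRingEnd ℂ) a * (a - b) + (starRingEnd ℂ) (a - b) * b
        = (starRingEnd ℂ) a * a - (starRingEnd ℂ) b * b := by
      rw [map_sub]; ring
    rw [h1, Complex.sub_re, ← norm_sq_re', ← norm_sq_re']
  have heq : (r ∘ γ) = fun t => (h (γ t) + ∑ j,
      ((starRingEnd ℂ) (f (γ t) j) * D j t
        + (starRingEnd ℂ) (D j t) * (U : Matrix (Fin N) (Fin N) ℂ).mulVec (g (γ t)) j)).re := by
    funext t
    rw [Function.comp_apply, hr (γ t), Complex.add_re, Complex.re_sum]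
    have hterm : ∀ j, ((starRingEnd ℂ) (f (γ t) j) * D j t
        + (starRingEnd ℂ) (D j t) * (U : Matrix (Fin N) (Fin N) ℂ).mulVec (g (γ t)) j).re
        = ‖f (γ t) j‖ ^ 2 - ‖(U : Matrix (Fin N) (Fin N) ℂ).mulVec (g (γ t)) j‖ ^ 2 :=
      fun j => habre _ _
    rw [Finset.sum_congr rfl fun j _ => hterm j, Finset.sum_sub_distrib,
      unitary_sum_sq U (g (γ t))]
    ring
  have hO : (r ∘ γ) =O[nhds (0 : ℂ)] fun t => ‖t‖ ^ (s + 1) := by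
    rw [heq]
    exact (Complex.reCLM.isBigO_comp _ _).trans hZ
  have hfin : ((s + 1 : ℕ) : ℕ∞) ≤ vord (r ∘ γ) := vord_of_isBigO hO
  rw [hs] at hfin
  have : s + 1 ≤ s := by exact_mod_cast hfin
  omega
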